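/- arXiv:1712.00687 — 2 statements merged into one kernel-verified Lean document; each statement's English description precedes it below -/
import Mathlib

section
/- Let u, v ∈ ℝ² be linearly independent vectors, let L = {m·u + n·v : m, n ∈ ℤ} be the lattice they generate, let p ∈ ℝ², let w ∈ ℝ² be nonzero, and let ℓ = {p + t·w : t ∈ ℝ}. Then the union ⋃_{g ∈ L} (g + ℓ) of the lattice translates of ℓ is a closed subset of ℝ² if and only if there exist integers m, n, not both zero, and a real number c, such that m·u + n·v = c·w. -/
-- zmultiples set is closed
lemma zmul_closed (r : ℝ) : IsClosed {z : ℝ | ∃ q : ℤ, z = q * r} := by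
  rcases eq_or_ne r 0 with hr | hr
  · have : {z : ℝ | ∃ q : ℤ, z = q * r} = {0} := by
      ext z; simp [hr]
    rw [this]; exact isClosed_singleton
  · have : {z : ℝ | ∃ q : ℤ, z = q * r} = (fun z => z / r) ⁻¹' Set.range ((↑) : ℤ → ℝ) := by
      ext z
      simp only [Set.mem_setOf_eq, Set.mem_preimage, Set.mem_range]
      constructor
      · rintro ⟨q, rfl⟩; exact ⟨q, by field_simp⟩
      · rintro ⟨q, hq⟩; exact ⟨q, by rw [hq, div_mul_cancel₀ _ hr]⟩
    rw [this]
    exact Int.isClosedEmbedding_coe_real.isClosed_range.preimage (continuous_id.div_const r)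

lemma closed_of_rel (α β : ℝ) (m n : ℤ) (hm : m ≠ 0) (hrel : (m : ℝ) * α + n * β = 0) :
    IsClosed {z : ℝ | ∃ j k : ℤ, z = j * α + k * β} := by
  have hmR : (m : ℝ) ≠ 0 := Int.cast_ne_zero.mpr hm
  have hα : (m : ℝ) * α = -(n * β) := by linarith
  set g : ℤ := (Int.gcd m n : ℤ) with hg
  have hgm : g ∣ m := Int.gcd_dvd_left m n
  have hgn : g ∣ n := Int.gcd_dvd_right m n
  have key : {z : ℝ | ∃ j k : ℤ, z = j * α + k * β} = {z : ℝ | ∃ q : ℤ, z = q * (g * β / m)} := by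
    ext z
    simp only [Set.mem_setOf_eq]
    constructor
    · rintro ⟨j, k, rfl⟩
      have hdvd : g ∣ (k * m - j * n) := dvd_sub (Dvd.dvd.mul_left hgm k) (Dvd.dvd.mul_left hgn j)
      obtain ⟨q, hq⟩ := hdvd
      refine ⟨q, ?_⟩
      have hq' : ((k : ℝ) * m - j * n) = g * q := by exact_mod_cast congrArg (Int.cast : ℤ → ℝ) hq
      field_simp
      linear_combination (j : ℝ) * hα + β * hq'
    · rintro ⟨q, rfl⟩
      obtain ⟨A, B, hAB⟩ : ∃ A B : ℤ, (g : ℤ) = m * A + n * B :=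
        ⟨Int.gcdA m n, Int.gcdB m n, Int.gcd_eq_gcd_ab m n⟩
      refine ⟨-(q * B), q * A, ?_⟩
      have hAB' : (g : ℝ) = m * A + n * B := by exact_mod_cast congrArg (Int.cast : ℤ → ℝ) hAB
      push_cast
      field_simp
      linear_combination ((q : ℝ) * β) * hAB' + ((q : ℝ) * (B : ℝ)) * hα
  rw [key]
  exact zmul_closed _

lemma core_iff (α β : ℝ) :
    IsClosed {z : ℝ | ∃ j k : ℤ, z = j * α + k * β} ↔
      ∃ m n : ℤ, ¬(m = 0 ∧ n = 0) ∧ (m : ℝ) * α + n * β = 0 := by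
  constructor
  · intro hcl
    by_contra hno
    push_neg at hno
    have hα : α ≠ 0 := by
      intro h; exact hno 1 0 (by simp) (by simp [h])
    have hβ : β ≠ 0 := by
      intro h; exact hno 0 1 (by simp) (by simp [h])
    set Hg : AddSubgroup ℝ :=
      { carrier := {z : ℝ | ∃ j k : ℤ, z = j * α + k * β}
        add_mem' := by
          rintro x y ⟨j, k, rfl⟩ ⟨j', k', rfl⟩
          exact ⟨j + j', k + k', by push_cast; ring⟩
        zero_mem' := ⟨0, 0, by simp⟩
        neg_mem' := by
          rintro x ⟨j, k, rfl⟩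
          exact ⟨-j, -k, by push_cast; ring⟩ } with hHg
    have hdense : Dense (Hg : Set ℝ) := by
      rcases Hg.dense_or_cyclic with h | ⟨a, ha⟩
      · exact h
      · exfalso
        have hαm : α ∈ Hg := ⟨1, 0, by simp⟩
        have hβm : β ∈ Hg := ⟨0, 1, by simp⟩
        rw [ha, AddSubgroup.mem_closure_singleton] at hαm hβm
        obtain ⟨j, hj⟩ := hαm
        obtain ⟨k, hk⟩ := hβm
        have hk0 : k ≠ 0 := by
          rintro rfl; simp at hk; exact hβ hk.symm
        refine hno k (-j) (by simp [hk0]) ?_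
        push_cast
        rw [← hj, ← hk]
        push_cast [zsmul_eq_mul]
        ring
    have hdense' : Dense {z : ℝ | ∃ j k : ℤ, z = j * α + k * β} := hdense
    have huniv : {z : ℝ | ∃ j k : ℤ, z = j * α + k * β} = Set.univ := by
      rw [← hcl.closure_eq]; exact hdense'.closure_eq
    have hcnt : ({z : ℝ | ∃ j k : ℤ, z = j * α + k * β}).Countable := by
      apply Set.Countable.mono ?_
        (Set.countable_range (fun jk : ℤ × ℤ => (jk.1 : ℝ) * α + jk.2 * β))
      rintro z ⟨j, k, rfl⟩
      exact ⟨(j, k), rfl⟩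
    rw [huniv] at hcnt
    exact Cardinal.not_countable_real hcnt
  · rintro ⟨m, n, hmn, hrel⟩
    rcases eq_or_ne m 0 with rfl | hm
    · have hn : n ≠ 0 := fun h => hmn ⟨rfl, h⟩
      have : {z : ℝ | ∃ j k : ℤ, z = j * α + k * β} = {z : ℝ | ∃ j k : ℤ, z = j * β + k * α} := by
        ext z; constructor
        · rintro ⟨j, k, rfl⟩; exact ⟨k, j, by ring⟩
        · rintro ⟨j, k, rfl⟩; exact ⟨k, j, by ring⟩
      rw [this]
      exact closed_of_rel β α n 0 hn (by push_cast at hrel ⊢; linarith)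
    · exact closed_of_rel α β m n hm hrel

theorem lattice_translates_of_line_closed_iff
    (u v p w : EuclideanSpace ℝ (Fin 2))
    (huv : LinearIndependent ℝ ![u, v]) (hw : w ≠ 0) :
    IsClosed {x : EuclideanSpace ℝ (Fin 2) |
        ∃ m n : ℤ, ∃ t : ℝ, x = ((m : ℝ) • u + (n : ℝ) • v) + (p + t • w)} ↔
      ∃ m n : ℤ, ¬(m = 0 ∧ n = 0) ∧ ∃ c : ℝ, (m : ℝ) • u + (n : ℝ) • v = c • w := by
  classical
  set f0 : EuclideanSpace ℝ (Fin 2) → ℝ := fun x => w 1 * x 0 - w 0 * x 1 with hf0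
  have hcont : Continuous f0 := by
    have h0 : Continuous fun x : EuclideanSpace ℝ (Fin 2) => x 0 :=
      (EuclideanSpace.proj (0 : Fin 2) : EuclideanSpace ℝ (Fin 2) →L[ℝ] ℝ).continuous
    have h1 : Continuous fun x : EuclideanSpace ℝ (Fin 2) => x 1 :=
      (EuclideanSpace.proj (1 : Fin 2) : EuclideanSpace ℝ (Fin 2) →L[ℝ] ℝ).continuous
    exact ((continuous_const.mul h0).sub (continuous_const.mul h1))
  have haddf : ∀ x y : EuclideanSpace ℝ (Fin 2), f0 (x + y) = f0 x + f0 y := by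
    intro x y; simp only [hf0, PiLp.add_apply]; ring
  have hsmulf : ∀ (c : ℝ) (x : EuclideanSpace ℝ (Fin 2)), f0 (c • x) = c * f0 x := by
    intro c x; simp only [hf0, PiLp.smul_apply, smul_eq_mul]; ring
  have hsubf : ∀ x y : EuclideanSpace ℝ (Fin 2), f0 (x - y) = f0 x - f0 y := by
    intro x y; simp only [hf0, PiLp.sub_apply]; ring
  have hfw : f0 w = 0 := by simp only [hf0]; ring
  -- w has a nonzero coordinate
  have hwc : w 0 ≠ 0 ∨ w 1 ≠ 0 := by
    by_contra h
    push_neg at h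
    apply hw
    ext i
    fin_cases i <;> simp [h.1, h.2]
  -- kernel of f0 is the span of w
  have hker : ∀ x : EuclideanSpace ℝ (Fin 2), f0 x = 0 → ∃ t : ℝ, x = t • w := by
    intro x hx
    simp only [hf0] at hx
    rcases eq_or_ne (w 0) 0 with h0 | h0
    · have h1 : w 1 ≠ 0 := by rcases hwc with h | h; exact absurd h0 h; exact h
      have hx0 : x 0 = 0 := by
        have h : w 1 * x 0 = 0 := by rw [h0] at hx; linarith
        exact (mul_eq_zero.mp h).resolve_left h1
      refine ⟨x 1 / w 1, ?_⟩
      ext i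
      fin_cases i
      · show x 0 = ((x 1 / w 1) • w) 0
        rw [PiLp.smul_apply, smul_eq_mul, hx0, h0]; ring
      · show x 1 = ((x 1 / w 1) • w) 1
        rw [PiLp.smul_apply, smul_eq_mul]; field_simp
    · refine ⟨x 0 / w 0, ?_⟩
      ext i
      fin_cases i
      · show x 0 = ((x 0 / w 0) • w) 0
        rw [PiLp.smul_apply, smul_eq_mul]; field_simp
      · show x 1 = ((x 0 / w 0) • w) 1
        rw [PiLp.smul_apply, smul_eq_mul, div_mul_eq_mul_div, eq_div_iff h0]
        linear_combination -hx
  set α : ℝ := f0 u with hα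
  set β : ℝ := f0 v with hβ
  -- a vector where f0 is nonzero
  set x₀ : EuclideanSpace ℝ (Fin 2) := (WithLp.equiv 2 (Fin 2 → ℝ)).symm ![w 1, -(w 0)] with hx₀
  have hfx₀ : f0 x₀ = w 1 * w 1 + w 0 * w 0 := by
    simp only [hf0, hx₀, WithLp.equiv_symm_apply, PiLp.toLp_apply, Matrix.cons_val_zero, Matrix.cons_val_one,
      Matrix.head_cons]
    ring
  have hd : f0 x₀ ≠ 0 := by
    rw [hfx₀]
    intro hc
    have h0 : w 0 = 0 := mul_self_eq_zero.mp (by nlinarith [mul_self_nonneg (w 1)])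
    have h1 : w 1 = 0 := mul_self_eq_zero.mp (by nlinarith [mul_self_nonneg (w 0)])
    rcases hwc with h | h
    · exact h h0
    · exact h h1
  set d : ℝ := f0 x₀ with hdd
  set ψ : ℝ → EuclideanSpace ℝ (Fin 2) := fun z => (z / d) • x₀ with hψ
  have hψc : Continuous ψ := by
    apply Continuous.smul (continuous_id.div_const d) continuous_const
  have hfψ : ∀ z, f0 (ψ z) = z := by
    intro z; rw [hψ]; simp only; rw [hsmulf]; field_simp; rw [hdd]
  set S : Set (EuclideanSpace ℝ (Fin 2)) := {x | ∃ m n : ℤ, ∃ t : ℝ,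
      x = ((m : ℝ) • u + (n : ℝ) • v) + (p + t • w)} with hS
  set H : Set ℝ := {z | ∃ j k : ℤ, z = j * α + k * β} with hH
  have hSpre : S = (fun x => f0 x - f0 p) ⁻¹' H := by
    ext x
    simp only [hS, hH, Set.mem_setOf_eq, Set.mem_preimage]
    constructor
    · rintro ⟨m, n, t, rfl⟩
      refine ⟨m, n, ?_⟩
      rw [haddf, haddf, haddf, hsmulf, hsmulf, hsmulf, hfw]
      ring
    · rintro ⟨j, k, hjk⟩
      have : f0 (x - (((j : ℝ) • u + (k : ℝ) • v) + p)) = 0 := by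
        rw [hsubf, haddf, haddf, hsmulf, hsmulf]
        rw [sub_eq_zero]
        linarith [hjk]
      obtain ⟨t, ht⟩ := hker _ this
      refine ⟨j, k, t, ?_⟩
      have := sub_eq_iff_eq_add.mp ht
      rw [this]; abel
  have hHpre : H = (fun z => ψ z + p) ⁻¹' S := by
    rw [hSpre]
    ext z
    simp only [Set.mem_preimage, haddf, hfψ, hH, Set.mem_setOf_eq]
    constructor
    · rintro ⟨j, k, h⟩; exact ⟨j, k, by rw [← h]; ring⟩
    · rintro ⟨j, k, h⟩; exact ⟨j, k, by rw [← h]; ring⟩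
  constructor
  · intro hcl
    have hHcl : IsClosed H := by
      rw [hHpre]
      exact hcl.preimage (hψc.add continuous_const)
    obtain ⟨m, n, hmn, hrel⟩ := (core_iff α β).mp hHcl
    refine ⟨m, n, hmn, ?_⟩
    have : f0 ((m : ℝ) • u + (n : ℝ) • v) = 0 := by
      rw [haddf, hsmulf, hsmulf]; rw [hα, hβ] at hrel; linarith
    obtain ⟨t, ht⟩ := hker _ this
    exact ⟨t, ht⟩
  · rintro ⟨m, n, hmn, c, hc⟩
    have hrel : (m : ℝ) * α + n * β = 0 := by
      have : f0 ((m : ℝ) • u + (n : ℝ) • v) = c * f0 w := by rw [hc, hsmulf]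
      rw [haddf, hsmulf, hsmulf, hfw] at this
      rw [hα, hβ]; linarith
    have hHcl : IsClosed H := (core_iff α β).mpr ⟨m, n, hmn, hrel⟩
    rw [hSpre]
    exact hHcl.preimage (hcont.sub continuous_const)
end

section
/- Let u, v ∈ ℝ² be linearly independent vectors, let L = {m·u + n·v : m, n ∈ ℤ}, let p ∈ ℝ², let w ∈ ℝ² be nonzero, and let ℓ = {p + t·w : t ∈ ℝ}. If there do not exist integers m, n, not both zero, and a real number c with m·u + n·v = c·w, then the union ⋃_{g ∈ L} (g + ℓ) is dense in ℝ². -/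
/-- Density of `{m + n*θ : m n : ℤ}` when `θ` is "irrational" in the sense that
`k*θ = l` has no integer solutions with `k ≠ 0`. -/
lemma dense_int_combo (θ : ℝ) (h : ∀ k l : ℤ, k ≠ 0 → (k : ℝ) * θ ≠ l)
    (x ε : ℝ) (hε : 0 < ε) : ∃ m n : ℤ, |(m : ℝ) + n * θ - x| < ε := by
  set S : AddSubgroup ℝ :=
    { carrier := {r | ∃ m n : ℤ, r = (m : ℝ) + n * θ}
      zero_mem' := ⟨0, 0, by simp⟩
      add_mem' := by
        rintro r s ⟨m, n, rfl⟩ ⟨m', n', rfl⟩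
        exact ⟨m + m', n + n', by push_cast; ring⟩
      neg_mem' := by
        rintro r ⟨m, n, rfl⟩
        exact ⟨-m, -n, by push_cast; ring⟩ } with hS
  have hdense : Dense (S : Set ℝ) := by
    rcases S.dense_or_cyclic with hd | ⟨g, hg⟩
    · exact hd
    · exfalso
      have h1 : (1 : ℝ) ∈ S := ⟨1, 0, by simp⟩
      have hθ : θ ∈ S := ⟨0, 1, by simp⟩
      rw [hg] at h1 hθ
      rw [AddSubgroup.mem_closure_singleton] at h1 hθ
      obtain ⟨k, hk⟩ := h1
      obtain ⟨l, hl⟩ := hθ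
      have hk0 : k ≠ 0 := by
        rintro rfl; simp at hk
      refine h k l hk0 ?_
      simp only [zsmul_eq_mul] at hk hl
      rw [← hl]
      have : (k : ℝ) * ((l : ℝ) * g) = (l : ℝ) * ((k : ℝ) * g) := by ring
      rw [this, hk, mul_one]
  have := Metric.dense_iff.mp hdense x ε hε
  obtain ⟨r, hr, m, n, rfl⟩ := this
  exact ⟨m, n, by simpa [Real.dist_eq, abs_sub_comm] using hr⟩

theorem lattice_translates_of_line_dense
    (u v p w : EuclideanSpace ℝ (Fin 2))
    (huv : LinearIndependent ℝ ![u, v]) (hw : w ≠ 0)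
    (hirr : ¬ ∃ m n : ℤ, ¬(m = 0 ∧ n = 0) ∧ ∃ c : ℝ, (m : ℝ) • u + (n : ℝ) • v = c • w) :
    Dense {x : EuclideanSpace ℝ (Fin 2) |
      ∃ m n : ℤ, ∃ t : ℝ, x = ((m : ℝ) • u + (n : ℝ) • v) + (p + t • w)} := by
  have hcard : Fintype.card (Fin 2) = Module.finrank ℝ (EuclideanSpace ℝ (Fin 2)) := by
    simp
  set B : Module.Basis (Fin 2) ℝ (EuclideanSpace ℝ (Fin 2)) :=
    basisOfLinearIndependentOfCardEqFinrank huv hcard with hB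
  have hB0 : B 0 = u := by
    rw [hB, coe_basisOfLinearIndependentOfCardEqFinrank]; rfl
  have hB1 : B 1 = v := by
    rw [hB, coe_basisOfLinearIndependentOfCardEqFinrank]; rfl
  have hrepr : ∀ z : EuclideanSpace ℝ (Fin 2), z = B.repr z 0 • u + B.repr z 1 • v := by
    intro z
    conv_lhs => rw [← B.sum_repr z]
    rw [Fin.sum_univ_two, hB0, hB1]
  set a : ℝ := B.repr w 0
  set b : ℝ := B.repr w 1
  have hwab : w = a • u + b • v := hrepr w
  have hb : b ≠ 0 := by
    intro hb0
    have ha : a ≠ 0 := by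
      intro ha0
      apply hw
      rw [hwab, ha0, hb0]; simp
    apply hirr
    exact ⟨1, 0, by simp, a⁻¹, by rw [hwab, hb0]; simp [smul_smul, inv_mul_cancel₀ ha]⟩
  have hratio : ∀ k l : ℤ, k ≠ 0 → (k : ℝ) * (a / b) ≠ l := by
    intro k l hk0 heq
    apply hirr
    refine ⟨l, k, by simp [hk0], k / b, ?_⟩
    rw [hwab, smul_add, smul_smul, smul_smul]
    have h1 : (k : ℝ) / b * a = l := by
      field_simp at heq ⊢
      linarith [heq]
    have h2 : (k : ℝ) / b * b = k := by field_simp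
    rw [h1, h2]
  rw [Metric.dense_iff]
  intro z ε hε
  set x : ℝ := B.repr (z - p) 0
  set y : ℝ := B.repr (z - p) 1
  have hz : z - p = x • u + y • v := hrepr (z - p)
  have hεu : 0 < ε / (‖u‖ + 1) := by positivity
  obtain ⟨m, n, hmn⟩ := dense_int_combo (a / b) hratio (x - (a / b) * y) _ hεu
  refine ⟨(m : ℝ) • u + ((-n : ℤ) : ℝ) • v + (p + ((y + n) / b) • w), ?_, m, -n, (y + n) / b, rfl⟩
  rw [Metric.mem_ball]
  have hdiff : (m : ℝ) • u + ((-n : ℤ) : ℝ) • v + (p + ((y + n) / b) • w) - z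
      = ((m : ℝ) + (y + n) / b * a - x) • u := by
    have hz' : z = p + (x • u + y • v) := by rw [← hz]; abel
    rw [hz', hwab]
    push_cast
    rw [smul_add, smul_smul, smul_smul]
    match_scalars <;> (field_simp; try ring)
  have hcoef : (m : ℝ) + (y + n) / b * a - x = ((m : ℝ) + n * (a / b) - (x - (a / b) * y)) := by
    field_simp
    ring
  rw [dist_eq_norm, hdiff, norm_smul, hcoef]
  calc |((m : ℝ) + n * (a / b) - (x - (a / b) * y))| * ‖u‖
      ≤ (ε / (‖u‖ + 1)) * ‖u‖ := by
        apply mul_le_mul_of_nonneg_right (le_of_lt hmn) (norm_nonneg u)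
    _ < ε := by
        rw [div_mul_eq_mul_div, div_lt_iff₀ (by positivity)]
        nlinarith [norm_nonneg u]
end
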